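/- Let 𝔄 be a Boolean algebra, a ∈ 𝔄, and let ◇₀ and ◇₁ be operators on 𝔄 (unary functions preserving finite joins and ⊥), with duals □ᵢx := ¬◇ᵢ¬x. Suppose (1) ◇₁ is completely additive, and (2) for every x ∈ 𝔄, a ≤ □₁(□₀(□₀x → x) → x), where u → v abbreviates ¬u ∨ v. Then a ≤ □₁⊥. -/

import Mathlib

/-- The dual box of an operator `f` on a Boolean algebra. -/
def mbox {α : Type*} [BooleanAlgebra α] (f : α → α) (x : α) : α := (f xᶜ)ᶜ

/-- Theorem 5.1 of the paper: if `◇₁` is completely additive and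
`a ≤ □₁(□₀(□₀x → x) → x)` for all `x`, then `a ≤ □₁⊥`. -/
theorem stmt_7 {α : Type*} [BooleanAlgebra α] (f0 f1 : α → α) (a : α)
    (h0join : ∀ x y : α, f0 (x ⊔ y) = f0 x ⊔ f0 y) (h0bot : f0 ⊥ = ⊥)
    (h1join : ∀ x y : α, f1 (x ⊔ y) = f1 x ⊔ f1 y) (h1bot : f1 ⊥ = ⊥)
    (hV : ∀ (X : Set α) (s : α), IsLUB X s → IsLUB (f1 '' X) (f1 s))
    (hax : ∀ x : α, a ≤ mbox f1 ((mbox f0 ((mbox f0 x)ᶜ ⊔ x))ᶜ ⊔ x)) :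
    a ≤ mbox f1 ⊥ := by
  -- □₀⊤ = ⊤
  have hbox0top : mbox f0 ⊤ = ⊤ := by simp [mbox, h0bot]
  -- The key set
  set X : Set α := {y | f1 y ≤ aᶜ} with hXdef
  -- membership of the "Löb terms"
  have hmem : ∀ x : α, mbox f0 ((mbox f0 x)ᶜ ⊔ x) ⊓ xᶜ ∈ X := by
    intro x
    have h := hax x
    have h' : f1 ((mbox f0 ((mbox f0 x)ᶜ ⊔ x))ᶜ ⊔ x)ᶜ ≤ aᶜ := by
      have := compl_le_compl h
      simpa [mbox] using this
    simpa [compl_sup, compl_compl, hXdef] using h'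
  -- ⊤ is the least upper bound of X
  have hlub : IsLUB X ⊤ := by
    constructor
    · intro y _; exact le_top
    · intro b hb
      have hd1 : mbox f0 ((mbox f0 b)ᶜ ⊔ b) ⊓ bᶜ ≤ b := hb (hmem b)
      set d : α := (mbox f0 b)ᶜ ⊔ b with hddef
      -- □₀ d ≤ b
      have h1 : mbox f0 d ≤ b := by
        have hbot : mbox f0 d ⊓ bᶜ = ⊥ :=
          le_antisymm (le_inf hd1 inf_le_right |>.trans (by simp)) bot_le
      -- x ⊓ yᶜ = ⊥ → x ≤ y
        exact sdiff_eq_bot_iff.mp (show mbox f0 d \ b = ⊥ by rw [sdiff_eq]; exact hbot)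
      -- (□₀ d)ᶜ ⊔ d = ⊤
      have h2 : (mbox f0 d)ᶜ ⊔ d = ⊤ := by
        rw [eq_top_iff, ← compl_sup_eq_top (x := mbox f0 d)]
        exact sup_le_sup_left (h1.trans le_sup_right) _
      -- second application of the hypothesis, at x = d
      have hd2 : mbox f0 ((mbox f0 d)ᶜ ⊔ d) ⊓ dᶜ ≤ b := hb (hmem d)
      rw [h2, hbox0top, top_inf_eq] at hd2
      -- dᶜ ≤ b ≤ d, so d = ⊤
      have hdtop : d = ⊤ := by
        have : dᶜ ≤ d := hd2.trans le_sup_right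
        have : dᶜ = ⊥ := le_antisymm (by simpa using le_inf this le_rfl) bot_le
        simpa using congrArg compl this
      have : mbox f0 d = ⊤ := by rw [hdtop, hbox0top]
      rw [this] at h1
      exact h1
  -- complete additivity
  have himg : IsLUB (f1 '' X) (f1 ⊤) := hV X ⊤ hlub
  have hup : aᶜ ∈ upperBounds (f1 '' X) := by
    rintro _ ⟨y, hy, rfl⟩; exact hy
  have hfin : f1 ⊤ ≤ aᶜ := himg.2 hup
  have : a ≤ (f1 ⊤)ᶜ := by
    have := compl_le_compl hfin
    simpa using this
  simpa [mbox] using this
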